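/- Consider the system ζ̇_{j1} = c̄_{j1}h_j, ζ̇_{jq} = -ā_{jq}ζ_{jq} + c̄_{jq}h_j (q = 2,…,r_j), μ_j = Σ_q ζ_{jq} + d̄_j h_j, where h = Ax - b and Ax* = b. Then W := Σ_j [(1/(2c̄_{j1}))|ζ_{j1} - μ_j*|² + Σ_{q≥2}(1/(2c̄_{jq}))ζ_{jq}²] satisfies Ẇ = (x - x*)ᵀAᵀ(μ - μ*) - Σ_j(d̄_j h_j² + Σ_{q≥2}(ā_{jq}/c̄_{jq})ζ_{jq}²) ≤ (x - x*)ᵀAᵀ(μ - μ*). -/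

import Mathlib

open Finset

/-- Passivity of the equality-constraint dual block: with h = Ax - b and Ax* = b,
 the storage W satisfies Ẇ = (x-x*)ᵀAᵀ(μ-μ*) - damping ≤ (x-x*)ᵀAᵀ(μ-μ*). -/
theorem stmt_7 {n r : ℕ} {R : Fin r → ℕ}
    (A : Matrix (Fin r) (Fin n) ℝ) (b : Fin r → ℝ)
    (c a : (j : Fin r) → Fin (R j + 1) → ℝ) (d : Fin r → ℝ)
    (hc : ∀ j q, 0 < c j q) (ha : ∀ j q, q ≠ 0 → 0 < a j q) (hd : ∀ j, 0 ≤ d j)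
    (xs : Fin n → ℝ) (μs : Fin r → ℝ)
    (hxs : ∀ j, (∑ i, A j i * xs i) = b j)
    (x : ℝ → Fin n → ℝ) (h : Fin r → ℝ → ℝ)
    (hh : ∀ j t, h j t = (∑ i, A j i * x t i) - b j)
    (ζ : (j : Fin r) → Fin (R j + 1) → ℝ → ℝ) (μ : Fin r → ℝ → ℝ)
    (hdyn0 : ∀ j t, HasDerivAt (ζ j 0) (c j 0 * h j t) t)
    (hdyn : ∀ j, ∀ q, q ≠ 0 → ∀ t, HasDerivAt (ζ j q) (-a j q * ζ j q t + c j q * h j t) t)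
    (hμ : ∀ j t, μ j t = (∑ q, ζ j q t) + d j * h j t)
    (W : ℝ → ℝ)
    (hW : ∀ t, W t = ∑ j, ((1 / (2 * c j 0)) * (ζ j 0 t - μs j) ^ 2
        + ∑ q ∈ univ.erase 0, (1 / (2 * c j q)) * (ζ j q t) ^ 2)) :
    ∀ t, HasDerivAt W
        ((∑ i, (x t i - xs i) * (∑ j, A j i * (μ j t - μs j)))
          - ∑ j, (d j * (h j t) ^ 2
              + ∑ q ∈ univ.erase 0, (a j q / c j q) * (ζ j q t) ^ 2)) t ∧
      (∑ i, (x t i - xs i) * (∑ j, A j i * (μ j t - μs j)))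
          - (∑ j, (d j * (h j t) ^ 2
              + ∑ q ∈ univ.erase 0, (a j q / c j q) * (ζ j q t) ^ 2))
        ≤ ∑ i, (x t i - xs i) * (∑ j, A j i * (μ j t - μs j)) := by
  intro t
  have hh' : ∀ j, h j t = ∑ i, A j i * (x t i - xs i) := by
    intro j
    rw [hh, ← hxs j]
    simp [mul_sub, Finset.sum_sub_distrib]
  have hζsum : ∀ j, ζ j 0 t + ∑ q ∈ univ.erase 0, ζ j q t = μ j t - d j * h j t := by
    intro j
    have he := Finset.add_sum_erase univ (fun q => ζ j q t)
      (Finset.mem_univ (0 : Fin (R j + 1)))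
    rw [hμ]
    linarith
  have hswap : (∑ i, (x t i - xs i) * (∑ j, A j i * (μ j t - μs j)))
      = ∑ j, h j t * (μ j t - μs j) := by
    simp only [Finset.mul_sum, hh', Finset.sum_mul]
    rw [Finset.sum_comm]
    exact Finset.sum_congr rfl fun j _ => Finset.sum_congr rfl fun i _ => by ring
  have key : (∑ i, (x t i - xs i) * (∑ j, A j i * (μ j t - μs j)))
          - ∑ j, (d j * (h j t) ^ 2
              + ∑ q ∈ univ.erase 0, (a j q / c j q) * (ζ j q t) ^ 2)
      = ∑ j, ((ζ j 0 t - μs j) * h j t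
          + ∑ q ∈ univ.erase 0, (ζ j q t * h j t - (a j q / c j q) * (ζ j q t) ^ 2)) := by
    rw [hswap, ← Finset.sum_sub_distrib]
    refine Finset.sum_congr rfl fun j _ => ?_
    have h1 := hζsum j
    rw [Finset.sum_sub_distrib, ← Finset.sum_mul]
    have h2 : (ζ j 0 t - μs j) * h j t + ((∑ q ∈ univ.erase 0, ζ j q t) * h j t
        - ∑ q ∈ univ.erase 0, (a j q / c j q) * (ζ j q t) ^ 2)
      = (ζ j 0 t + ∑ q ∈ univ.erase 0, ζ j q t) * h j t - μs j * h j t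
        - ∑ q ∈ univ.erase 0, (a j q / c j q) * (ζ j q t) ^ 2 := by ring
    rw [h2, h1]
    ring
  constructor
  · have hderivj : ∀ j ∈ (univ : Finset (Fin r)), HasDerivAt
        (fun t => (1 / (2 * c j 0)) * (ζ j 0 t - μs j) ^ 2
          + ∑ q ∈ univ.erase 0, (1 / (2 * c j q)) * (ζ j q t) ^ 2)
        ((ζ j 0 t - μs j) * h j t
          + ∑ q ∈ univ.erase 0, (ζ j q t * h j t - (a j q / c j q) * (ζ j q t) ^ 2)) t := by
      intro j _
      have h0 : HasDerivAt (fun t => (1 / (2 * c j 0)) * (ζ j 0 t - μs j) ^ 2)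
          ((ζ j 0 t - μs j) * h j t) t := by
        have hder := (((hdyn0 j t).sub_const (μs j)).pow 2).const_mul (1 / (2 * c j 0))
        convert hder using 1
        · rfl
        · rfl
        · rfl
        have hc0 := (hc j 0).ne'
        field_simp
        ring
      have hq : ∀ q ∈ univ.erase (0 : Fin (R j + 1)),
          HasDerivAt (fun t => (1 / (2 * c j q)) * (ζ j q t) ^ 2)
            (ζ j q t * h j t - (a j q / c j q) * (ζ j q t) ^ 2) t := by
        intro q hq
        have hq0 : q ≠ 0 := (Finset.mem_erase.mp hq).1
        have hder := ((hdyn j q hq0 t).pow 2).const_mul (1 / (2 * c j q))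
        convert hder using 1
        · rfl
        · rfl
        · rfl
        have hcq := (hc j q).ne'
        field_simp
        ring
      exact h0.add (HasDerivAt.fun_sum hq)
    have hWf : W = fun t => ∑ j, ((1 / (2 * c j 0)) * (ζ j 0 t - μs j) ^ 2
        + ∑ q ∈ univ.erase 0, (1 / (2 * c j q)) * (ζ j q t) ^ 2) := funext hW
    rw [hWf, key]
    exact HasDerivAt.fun_sum hderivj
  · have hnn : 0 ≤ ∑ j, (d j * (h j t) ^ 2
        + ∑ q ∈ univ.erase 0, (a j q / c j q) * (ζ j q t) ^ 2) := by
      refine Finset.sum_nonneg fun j _ => add_nonneg ?_ ?_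
      · exact mul_nonneg (hd j) (sq_nonneg _)
      · refine Finset.sum_nonneg fun q hq => mul_nonneg ?_ (sq_nonneg _)
        exact div_nonneg (ha j q (Finset.mem_erase.mp hq).1).le (hc j q).le
    linarith
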